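/- For every z ∈ ℂ and every ψ ∈ ℝ, the 3×3 real matrix S = 1/(1+|z|²) · [[2Re(z), Im(e^{−iψ/2} + e^{iψ/2}z²), Re(e^{−iψ/2} − e^{iψ/2}z²)], [2Im(z), −Re(e^{−iψ/2} + e^{iψ/2}z²), Im(e^{−iψ/2} − e^{iψ/2}z²)], [1−|z|², 2Im(e^{iψ/2}z), −2Re(e^{iψ/2}z)]] is a special orthogonal matrix, i.e. SᵀS = I and det S = 1. -/

import Mathlib

open Matrix

set_option maxHeartbeats 1000000 in
/-- For every `z ∈ ℂ` and `ψ ∈ ℝ`, the matrix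
`S = 1/(1+|z|²) · [[2Re z, Im(e^{−iψ/2} + e^{iψ/2}z²), Re(e^{−iψ/2} − e^{iψ/2}z²)],
[2Im z, −(e^{−iψ/2} + e^{iψ/2}z²).re, Im(e^{−iψ/2} − e^{iψ/2}z²)],
[1−|z|², 2Im(e^{iψ/2}z), −2Re(e^{iψ/2}z)]]`
is special orthogonal: `SᵀS = 1` and `det S = 1`. -/
theorem so3_parametrization (z : ℂ) (ψ : ℝ) :
    let e : ℂ := Complex.exp (Complex.I * (ψ / 2))
    let e' : ℂ := Complex.exp (-(Complex.I * (ψ / 2)))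
    let S : Matrix (Fin 3) (Fin 3) ℝ :=
      (1 + ‖z‖ ^ 2)⁻¹ •
        !![2 * z.re, (e' + e * z ^ 2).im, (e' - e * z ^ 2).re;
           2 * z.im, -(e' + e * z ^ 2).re, (e' - e * z ^ 2).im;
           1 - ‖z‖ ^ 2, 2 * (e * z).im, -2 * (e * z).re]
    Sᵀ * S = 1 ∧ S.det = 1 := by
  intro e e' S
  have he' : e' = starRingEnd ℂ e := by
    have hconj : (starRingEnd ℂ) (Complex.I * (ψ / 2)) = -(Complex.I * (ψ / 2)) := by
      rw [_root_.map_mul, map_div₀, Complex.conj_I, Complex.conj_ofReal, map_ofNat]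
      ring
    rw [← Complex.exp_conj, hconj]
  have h1 : ‖e‖ = 1 := by
    simp [e, Complex.norm_exp]
  have habs : e.re ^ 2 + e.im ^ 2 = 1 := by
    have := Complex.sq_norm e
    rw [h1, Complex.normSq_apply] at this
    nlinarith [this]
  have hz : ‖z‖ ^ 2 = z.re ^ 2 + z.im ^ 2 := by
    rw [Complex.sq_norm, Complex.normSq_apply]; ring
  set a := z.re with ha
  set b := z.im with hb
  set c := e.re with hc
  set s := e.im with hs
  have hd : (0:ℝ) < 1 + (a ^ 2 + b ^ 2) := by positivity
  have hS : S = (1 + (a ^ 2 + b ^ 2))⁻¹ •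
      !![2 * a, -s + (s * (a^2 - b^2) + c * (2*a*b)), c - (c * (a^2 - b^2) - s * (2*a*b));
         2 * b, -(c + (c * (a^2 - b^2) - s * (2*a*b))), -s - (s * (a^2 - b^2) + c * (2*a*b));
         1 - (a ^ 2 + b ^ 2), 2 * (s * a + c * b), -2 * (c * a - s * b)] := by
    simp only [S, hz]
    congr 1
    ext i j
    fin_cases i <;> fin_cases j <;>
      simp only [he', Complex.add_re, Complex.add_im, Complex.sub_re, Complex.sub_im,
        Complex.mul_re, Complex.mul_im, Complex.conj_re, Complex.conj_im, pow_two,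
        Matrix.cons_val', Matrix.cons_val_zero, Matrix.cons_val_one, Matrix.head_cons,
        Matrix.empty_val', Matrix.cons_val_fin_one, Matrix.cons_val_two, Matrix.tail_cons,
        Matrix.head_fin_const, Fin.isValue, neg_neg, Matrix.of_apply, Fin.zero_eta, Fin.mk_one,
        Matrix.cons_val, ← ha, ← hb, ← hc, ← hs] <;>
      ring
  rw [hS]
  clear_value a b c s S
  clear hS hz h1 he' S e e' z ha hb hc hs
  have hd' : (1:ℝ) + (a ^ 2 + b ^ 2) ≠ 0 := ne_of_gt hd
  have hT : (!![2 * a, -s + (s * (a^2 - b^2) + c * (2*a*b)), c - (c * (a^2 - b^2) - s * (2*a*b));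
         2 * b, -(c + (c * (a^2 - b^2) - s * (2*a*b))), -s - (s * (a^2 - b^2) + c * (2*a*b));
         1 - (a ^ 2 + b ^ 2), 2 * (s * a + c * b), -2 * (c * a - s * b)])ᵀ =
      !![2 * a, 2 * b, 1 - (a ^ 2 + b ^ 2);
         -s + (s * (a^2 - b^2) + c * (2*a*b)), -(c + (c * (a^2 - b^2) - s * (2*a*b))), 2 * (s * a + c * b);
         c - (c * (a^2 - b^2) - s * (2*a*b)), -s - (s * (a^2 - b^2) + c * (2*a*b)), -2 * (c * a - s * b)] := by
    ext i j
    fin_cases i <;> fin_cases j <;> rfl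
  constructor
  · rw [Matrix.transpose_smul, Matrix.smul_mul, Matrix.mul_smul, smul_smul, hT]
    have hM : !![2 * a, 2 * b, 1 - (a ^ 2 + b ^ 2);
         -s + (s * (a^2 - b^2) + c * (2*a*b)), -(c + (c * (a^2 - b^2) - s * (2*a*b))), 2 * (s * a + c * b);
         c - (c * (a^2 - b^2) - s * (2*a*b)), -s - (s * (a^2 - b^2) + c * (2*a*b)), -2 * (c * a - s * b)] *
        !![2 * a, -s + (s * (a^2 - b^2) + c * (2*a*b)), c - (c * (a^2 - b^2) - s * (2*a*b));
         2 * b, -(c + (c * (a^2 - b^2) - s * (2*a*b))), -s - (s * (a^2 - b^2) + c * (2*a*b));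
         1 - (a ^ 2 + b ^ 2), 2 * (s * a + c * b), -2 * (c * a - s * b)] =
        ((1 + (a ^ 2 + b ^ 2)) ^ 2) • (1 : Matrix (Fin 3) (Fin 3) ℝ) := by
      ext i j
      fin_cases i <;> fin_cases j <;>
        simp [Matrix.mul_apply, Fin.sum_univ_three, Matrix.one_apply] <;>
        first
          | ring1
          | linear_combination ((1 + (a ^ 2 + b ^ 2)) ^ 2) * habs
    rw [hM, smul_smul]
    have : (1 + (a ^ 2 + b ^ 2))⁻¹ * (1 + (a ^ 2 + b ^ 2))⁻¹ * (1 + (a ^ 2 + b ^ 2)) ^ 2 = 1 := by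
      field_simp
    rw [this, one_smul]
  · rw [Matrix.det_smul, Matrix.det_fin_three]
    simp only [Fintype.card_fin, Matrix.cons_val_zero, Matrix.cons_val_one, Matrix.head_cons,
      Matrix.cons_val_two, Matrix.tail_cons, Matrix.of_apply, Matrix.cons_val', Matrix.empty_val',
      Matrix.cons_val_fin_one, Matrix.head_fin_const, Fin.isValue]
    have hdet : (2 * a) * (-(c + (c * (a^2 - b^2) - s * (2*a*b)))) * (-2 * (c * a - s * b))
        - (2 * a) * (-s - (s * (a^2 - b^2) + c * (2*a*b))) * (2 * (s * a + c * b))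
        - (-s + (s * (a^2 - b^2) + c * (2*a*b))) * (2 * b) * (-2 * (c * a - s * b))
        + (-s + (s * (a^2 - b^2) + c * (2*a*b))) * (-s - (s * (a^2 - b^2) + c * (2*a*b))) * (1 - (a ^ 2 + b ^ 2))
        + (c - (c * (a^2 - b^2) - s * (2*a*b))) * (2 * b) * (2 * (s * a + c * b))
        - (c - (c * (a^2 - b^2) - s * (2*a*b))) * (-(c + (c * (a^2 - b^2) - s * (2*a*b)))) * (1 - (a ^ 2 + b ^ 2))
        = (1 + (a ^ 2 + b ^ 2)) ^ 3 := by
      linear_combination ((1 + (a ^ 2 + b ^ 2)) ^ 3) * habs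
    rw [show ((1 + (a ^ 2 + b ^ 2))⁻¹ ^ 3 : ℝ) = ((1 + (a ^ 2 + b ^ 2)) ^ 3)⁻¹ by
      rw [inv_pow]]
    rw [hdet]
    exact inv_mul_cancel₀ (by positivity)
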